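/- arXiv:1602.08613 — 2 statements merged into one kernel-verified Lean document; each statement's English description precedes it below -/
import Mathlib

section
/- Let A be a real symmetric n×n matrix, Y ∈ ℝⁿ, τ ∈ ℝ, z ∈ ℂ with Im z ≠ 0, and set G^0 = (A - zI)⁻¹, A_τ = 1 + τ(G^0 Y, Y), B_τ = τ((G^0)² Y, Y). Then |B_τ / A_τ| ≤ 1/|Im z|. -/
open Matrix Finset

lemma key_bound (z : ℂ) (hz : z.im ≠ 0) (n : ℕ) (w ev : Fin n → ℝ)
    (hw : ∀ i, 0 ≤ w i) (τ : ℝ) :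
    Norm.norm ((τ : ℂ) * ∑ j, (w j : ℂ) * (((ev j : ℂ) - z)⁻¹ * ((ev j : ℂ) - z)⁻¹)) /
      Norm.norm (1 + (τ : ℂ) * ∑ j, (w j : ℂ) * ((ev j : ℂ) - z)⁻¹) ≤ 1 / |z.im| := by
  set S : ℝ := ∑ j, w j * (Complex.normSq ((ev j : ℂ) - z))⁻¹ with hS
  have habs : ∀ j : Fin n, Norm.norm (((ev j : ℂ) - z)⁻¹ * ((ev j : ℂ) - z)⁻¹)
      = (Complex.normSq ((ev j : ℂ) - z))⁻¹ := by
    intro j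
    rw [norm_mul, norm_inv, ← mul_inv, ← Complex.sq_norm, sq]
  have hnum : Norm.norm ((τ : ℂ) * ∑ j, (w j : ℂ) * (((ev j : ℂ) - z)⁻¹ * ((ev j : ℂ) - z)⁻¹))
      ≤ |τ| * S := by
    rw [norm_mul, Complex.norm_real, Real.norm_eq_abs]
    refine mul_le_mul_of_nonneg_left ?_ (abs_nonneg τ)
    refine (norm_sum_le _ _).trans ?_
    apply le_of_eq
    refine Finset.sum_congr rfl fun j _ => ?_
    rw [norm_mul, Complex.norm_real, Real.norm_eq_abs, abs_of_nonneg (hw j), habs]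
  have him : (∑ j, (w j : ℂ) * ((ev j : ℂ) - z)⁻¹).im = z.im * S := by
    rw [Complex.im_sum, hS, Finset.mul_sum]
    refine Finset.sum_congr rfl fun j _ => ?_
    rw [Complex.mul_im, Complex.ofReal_re, Complex.ofReal_im, zero_mul, add_zero,
      Complex.inv_im]
    have : ((ev j : ℂ) - z).im = -z.im := by simp
    rw [this]
    ring
  have hden : |τ| * |z.im| * S ≤ Norm.norm (1 + (τ : ℂ) * ∑ j, (w j : ℂ) * ((ev j : ℂ) - z)⁻¹) := by
    refine le_trans ?_ (Complex.abs_im_le_norm _)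
    rw [Complex.add_im, Complex.one_im, zero_add, Complex.mul_im, Complex.ofReal_re,
      Complex.ofReal_im, zero_mul, add_zero, him]
    rw [abs_mul, abs_mul]
    have hSnn : 0 ≤ S := Finset.sum_nonneg fun j _ => mul_nonneg (hw j) (inv_nonneg.2 (Complex.normSq_nonneg _))
    rw [abs_of_nonneg hSnn]
    ring_nf
    exact le_refl _
  by_cases hd0 : Norm.norm (1 + (τ : ℂ) * ∑ j, (w j : ℂ) * ((ev j : ℂ) - z)⁻¹) = 0
  · rw [hd0, div_zero]
    positivity
  · have hdpos : 0 < Norm.norm (1 + (τ : ℂ) * ∑ j, (w j : ℂ) * ((ev j : ℂ) - z)⁻¹) :=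
      lt_of_le_of_ne (by positivity) (Ne.symm hd0)
    rw [div_le_div_iff₀ hdpos (abs_pos.2 hz), one_mul]
    calc Norm.norm _ * |z.im| ≤ (|τ| * S) * |z.im| :=
          mul_le_mul_of_nonneg_right hnum (abs_nonneg _)
      _ = |τ| * |z.im| * S := by ring
      _ ≤ _ := hden


/-- with `A_τ = 1 + τ(G⁰Y,Y)` and `B_τ = τ((G⁰)²Y,Y)` for a real symmetric
matrix `A` and `G⁰ = (A - zI)⁻¹`, one has `|B_τ / A_τ| ≤ 1/|Im z|`. -/
theorem stmt3 (n : ℕ) (A : Matrix (Fin n) (Fin n) ℝ) (hA : A.IsSymm)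
    (Y : Fin n → ℝ) (τ : ℝ) (z : ℂ) (hz : z.im ≠ 0) :
    Norm.norm
      (((τ : ℂ) * ((fun i => (Y i : ℂ)) ⬝ᵥ
          (((A.map Complex.ofReal - z • 1)⁻¹ * (A.map Complex.ofReal - z • 1)⁻¹) *ᵥ
            (fun i => (Y i : ℂ))))) /
        (1 + (τ : ℂ) * ((fun i => (Y i : ℂ)) ⬝ᵥ
          ((A.map Complex.ofReal - z • 1)⁻¹ *ᵥ (fun i => (Y i : ℂ)))))) ≤
      1 / |z.im| := by

  classical
  have hH : (A.map Complex.ofReal).IsHermitian := by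
    rw [Matrix.IsHermitian]
    ext i j
    simp [Matrix.conjTranspose_apply, hA.apply]
  set Yc : Fin n → ℂ := fun i => (Y i : ℂ) with hYc
  set U : Matrix (Fin n) (Fin n) ℂ := (hH.eigenvectorUnitary : Matrix (Fin n) (Fin n) ℂ) with hU
  have hU1 : U * star U = 1 := (Matrix.mem_unitaryGroup_iff).mp hH.eigenvectorUnitary.2
  have hU2 : star U * U = 1 := (Matrix.mem_unitaryGroup_iff').mp hH.eigenvectorUnitary.2
  set ev : Fin n → ℝ := hH.eigenvalues with hev
  set c : Fin n → ℂ := fun i => (ev i : ℂ) - z with hc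
  have hc0 : ∀ i, c i ≠ 0 := by
    intro i h
    apply hz
    have := congrArg Complex.im h
    simpa [hc] using this
  have hspec : A.map Complex.ofReal = U * Matrix.diagonal (fun i => (ev i : ℂ)) * star U := by
    have := hH.spectral_theorem
    rw [Unitary.conjStarAlgAut_apply] at this
    exact this
  have hsand : ∀ g₁ g₂ : Fin n → ℂ,
      (U * Matrix.diagonal g₁ * star U) * (U * Matrix.diagonal g₂ * star U)
      = U * Matrix.diagonal (fun i => g₁ i * g₂ i) * star U := by
    intro g₁ g₂
    calc (U * Matrix.diagonal g₁ * star U) * (U * Matrix.diagonal g₂ * star U)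
        = U * Matrix.diagonal g₁ * (star U * U) * (Matrix.diagonal g₂ * star U) := by
          simp only [Matrix.mul_assoc]
      _ = U * (Matrix.diagonal g₁ * Matrix.diagonal g₂) * star U := by
          rw [hU2, Matrix.mul_one]; simp only [Matrix.mul_assoc]
      _ = _ := by rw [Matrix.diagonal_mul_diagonal]
  have hMdecomp : A.map Complex.ofReal - z • 1 = U * Matrix.diagonal c * star U := by
    have h1 : Matrix.diagonal c
        = Matrix.diagonal (fun i => (ev i : ℂ)) - z • (1 : Matrix (Fin n) (Fin n) ℂ) := by
      ext i j
      by_cases h : i = j <;>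
        simp [Matrix.diagonal_apply, Matrix.one_apply, h, hc]
    rw [hspec, h1, Matrix.mul_sub, Matrix.sub_mul]
    congr 1
    rw [Matrix.mul_smul, Matrix.mul_one, Matrix.smul_mul, hU1]
  have hGinv : (A.map Complex.ofReal - z • 1) * (U * Matrix.diagonal (fun i => (c i)⁻¹) * star U)
      = 1 := by
    rw [hMdecomp, hsand]
    have : (fun i => c i * (c i)⁻¹) = fun _ : Fin n => (1 : ℂ) := by
      funext i; exact mul_inv_cancel₀ (hc0 i)
    rw [this, Matrix.diagonal_one, Matrix.mul_one, hU1]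
  have hG : (A.map Complex.ofReal - z • 1)⁻¹ = U * Matrix.diagonal (fun i => (c i)⁻¹) * star U :=
    Matrix.inv_eq_right_inv hGinv
  have hGG : (A.map Complex.ofReal - z • 1)⁻¹ * (A.map Complex.ofReal - z • 1)⁻¹
      = U * Matrix.diagonal (fun i => (c i)⁻¹ * (c i)⁻¹) * star U := by
    rw [hG, hsand]
  set v : Fin n → ℂ := (star U) *ᵥ Yc with hv
  have hdot : ∀ g : Fin n → ℂ, Yc ⬝ᵥ ((U * Matrix.diagonal g * star U) *ᵥ Yc)
      = ∑ j, (Complex.normSq (v j) : ℂ) * g j := by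
    intro g
    rw [← Matrix.mulVec_mulVec, ← Matrix.mulVec_mulVec, Matrix.dotProduct_mulVec]
    have hvm : ∀ j, (Yc ᵥ* U) j = starRingEnd ℂ (v j) := by
      intro j
      simp only [hv, Matrix.vecMul, Matrix.mulVec, dotProduct, Matrix.star_apply,
        map_sum]
      refine Finset.sum_congr rfl fun i _ => ?_
      rw [_root_.map_mul, RCLike.star_def, Complex.conj_conj, hYc]
      simp [mul_comm, Complex.conj_ofReal]
    rw [dotProduct]
    refine Finset.sum_congr rfl fun j _ => ?_
    rw [hvm, Matrix.mulVec_diagonal, Complex.normSq_eq_conj_mul_self]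
    ring
  rw [hGG, hG, hdot, hdot, norm_div]
  simp only [hc]
  exact key_bound z hz n (fun j => Complex.normSq (v j)) ev
    (fun j => Complex.normSq_nonneg _) τ
end

section
/- Let M = ∑_{α=1}^m τ_α Y_α Y_αᵀ be an N×N real symmetric matrix with Y_α ∈ ℝᴺ, τ_α ∈ ℝ, G(z) = (M - zI)⁻¹, and g(z) = N⁻¹ Tr G(z). Then for z ∈ ℂ \ ℝ: z g(z) = -1 + m/N - N⁻¹ ∑_{α=1}^m (1 + τ_α (G^α(z) Y_α, Y_α))⁻¹, where G^α(z) = (M - τ_α Y_α Y_αᵀ - zI)⁻¹. -/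
open Matrix

section Stmt18Aux
variable {n : Type*} [Fintype n] [DecidableEq n]

lemma stmt18_herm_det_ne (A : Matrix n n ℂ) (hA : A.IsHermitian) {z : ℂ} (hz : z.im ≠ 0) :
    IsUnit (A - z • (1 : Matrix n n ℂ)).det := by
  rw [isUnit_iff_ne_zero]
  intro hdet
  obtain ⟨v, hv, hveq⟩ := (Matrix.exists_mulVec_eq_zero_iff).2 hdet
  have hAv : A *ᵥ v = z • v := by
    rw [Matrix.sub_mulVec, sub_eq_zero] at hveq
    rw [hveq, Matrix.smul_mulVec, Matrix.one_mulVec]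
  set r : ℝ := ∑ i, Complex.normSq (v i) with hr
  have hcr : star v ⬝ᵥ v = (r : ℂ) := by
    simp [dotProduct, hr, Complex.normSq_eq_conj_mul_self]
  have hr0 : r ≠ 0 := by
    intro h
    apply hv
    have hnn : ∀ i ∈ Finset.univ, 0 ≤ Complex.normSq (v i) := fun i _ => Complex.normSq_nonneg _
    have : ∀ i ∈ Finset.univ, Complex.normSq (v i) = 0 :=
      (Finset.sum_eq_zero_iff_of_nonneg hnn).mp (hr ▸ h)
    funext i
    exact Complex.normSq_eq_zero.mp (this i (Finset.mem_univ i))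
  have he : star (A *ᵥ v) ⬝ᵥ v = star (star v ⬝ᵥ (A *ᵥ v)) := by
    rw [Matrix.star_dotProduct]
  have he2 : star (A *ᵥ v) ⬝ᵥ v = star v ⬝ᵥ (A *ᵥ v) := by
    rw [Matrix.star_mulVec, hA.eq, ← Matrix.dotProduct_mulVec]
  have hd : star v ⬝ᵥ (A *ᵥ v) = z * r := by
    rw [hAv, dotProduct_smul, hcr, smul_eq_mul]
  rw [hd] at he he2
  rw [he2] at he
  have : (starRingEnd ℂ) z * r = z * r := by
    have := he.symm
    rwa [star_mul', RCLike.star_def, Complex.conj_ofReal] at this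
  have hzz : (starRingEnd ℂ) z = z :=
    mul_right_cancel₀ (by exact_mod_cast hr0) this
  exact hz (Complex.conj_eq_iff_im.mp hzz)

omit [DecidableEq n] in
lemma stmt18_vecMulVec_mulVec (a b u : n → ℂ) :
    vecMulVec a b *ᵥ u = (b ⬝ᵥ u) • a := by
  ext i
  simp only [Matrix.mulVec, dotProduct, vecMulVec_apply, Pi.smul_apply, smul_eq_mul,
    Finset.sum_mul]
  exact Finset.sum_congr rfl fun j _ => by ring

lemma stmt18_scalar_step (t q s : ℂ) (h : s = (1 - t * s) * q) :
    1 + t * q ≠ 0 ∧ t * s = 1 - (1 + t * q)⁻¹ := by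
  have hsA : s * (1 + t * q) = q := by linear_combination h
  have hA : 1 + t * q ≠ 0 := by
    intro h0
    have hq0 : q = 0 := by rw [← hsA, h0, mul_zero]
    rw [hq0, mul_zero, add_zero] at h0
    exact one_ne_zero h0
  refine ⟨hA, ?_⟩
  field_simp
  linear_combination t * hsA

lemma stmt18_rank_one (B : Matrix n n ℂ) (v : n → ℂ) (t : ℂ)
    (hB : IsUnit B.det) (hBt : IsUnit (B + t • vecMulVec v v).det) :
    1 + t * (v ⬝ᵥ (B⁻¹ *ᵥ v)) ≠ 0 ∧
    t * (v ⬝ᵥ ((B + t • vecMulVec v v)⁻¹ *ᵥ v)) = 1 - (1 + t * (v ⬝ᵥ (B⁻¹ *ᵥ v)))⁻¹ := by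
  have hGv : (B + t • vecMulVec v v) *ᵥ ((B + t • vecMulVec v v)⁻¹ *ᵥ v) = v := by
    rw [Matrix.mulVec_mulVec, Matrix.mul_nonsing_inv _ hBt, Matrix.one_mulVec]
  set u := (B + t • vecMulVec v v)⁻¹ *ᵥ v with hu
  rw [Matrix.add_mulVec, Matrix.smul_mulVec, stmt18_vecMulVec_mulVec] at hGv
  have hBu : B *ᵥ u = (1 - t * (v ⬝ᵥ u)) • v := by
    have h1 : B *ᵥ u = v - t • (v ⬝ᵥ u) • v := by
      rw [eq_sub_iff_add_eq]; exact hGv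
    rw [h1, smul_smul, sub_smul, one_smul]
  have hus : u = (1 - t * (v ⬝ᵥ u)) • (B⁻¹ *ᵥ v) := by
    have h3 := congrArg (fun w => B⁻¹ *ᵥ w) hBu
    simpa [Matrix.mulVec_mulVec, Matrix.nonsing_inv_mul _ hB, Matrix.one_mulVec,
      Matrix.mulVec_smul] using h3
  have hkey : v ⬝ᵥ u = (1 - t * (v ⬝ᵥ u)) * (v ⬝ᵥ (B⁻¹ *ᵥ v)) := by
    conv_lhs => rw [hus]
    rw [dotProduct_smul, smul_eq_mul]
  exact stmt18_scalar_step t _ _ hkey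

omit [DecidableEq n] in
lemma stmt18_trace_vecMulVec_mul (a : n → ℂ) (C : Matrix n n ℂ) :
    (vecMulVec a a * C).trace = a ⬝ᵥ (C *ᵥ a) := by
  simp only [Matrix.trace, Matrix.diag_apply, Matrix.mul_apply, vecMulVec_apply, dotProduct,
    Matrix.mulVec, Finset.mul_sum]
  rw [Finset.sum_comm]
  exact Finset.sum_congr rfl fun j _ => Finset.sum_congr rfl fun i _ => by ring

end Stmt18Aux

/-- for `M = ∑_α τ_α Y_α Y_αᵀ` and `g(z) = N⁻¹ Tr (M - zI)⁻¹`,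
`z g(z) = -1 + m/N - N⁻¹ ∑_α (1 + τ_α (G^α(z) Y_α, Y_α))⁻¹`, where
`G^α(z) = (M - τ_α Y_α Y_αᵀ - zI)⁻¹`. -/
theorem stmt18 (N m : ℕ) (hN : 0 < N) (τ : Fin m → ℝ) (Y : Fin m → Fin N → ℝ)
    (z : ℂ) (hz : z.im ≠ 0) :
    z * ((N : ℂ)⁻¹ *
        ((((∑ α, τ α • vecMulVec (Y α) (Y α)).map Complex.ofReal)
            - z • (1 : Matrix (Fin N) (Fin N) ℂ))⁻¹).trace) =
      -1 + (m : ℂ) / N - (N : ℂ)⁻¹ * ∑ α,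
        (1 + (τ α : ℂ) * ((fun i => (Y α i : ℂ)) ⬝ᵥ
          (((((∑ β, τ β • vecMulVec (Y β) (Y β)).map Complex.ofReal)
              - (τ α : ℂ) • vecMulVec (fun i => (Y α i : ℂ)) (fun i => (Y α i : ℂ))
              - z • (1 : Matrix (Fin N) (Fin N) ℂ))⁻¹) *ᵥ (fun i => (Y α i : ℂ)))))⁻¹ := by
  classical
  set v : Fin m → Fin N → ℂ := fun α i => (Y α i : ℂ) with hv
  set Mc : Matrix (Fin N) (Fin N) ℂ :=
    (∑ α, τ α • vecMulVec (Y α) (Y α)).map Complex.ofReal with hMcdef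
  have hMc : Mc = ∑ α, (τ α : ℂ) • vecMulVec (v α) (v α) := by
    ext i j
    simp only [hMcdef, Matrix.map_apply, Matrix.sum_apply, Matrix.smul_apply, vecMulVec_apply,
      smul_eq_mul, hv]
    push_cast
    rfl
  have hermMc : Mc.IsHermitian := by
    rw [hMc]
    ext i j
    simp only [Matrix.conjTranspose_apply, Matrix.sum_apply, Matrix.smul_apply,
      vecMulVec_apply, smul_eq_mul, star_sum, star_mul', hv, Complex.star_def,
      Complex.conj_ofReal]
    exact Finset.sum_congr rfl fun α _ => by ring
  have hermV : ∀ α, ((τ α : ℂ) • vecMulVec (v α) (v α)).IsHermitian := by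
    intro α
    ext i j
    simp only [Matrix.conjTranspose_apply, Matrix.smul_apply, vecMulVec_apply, smul_eq_mul,
      star_mul', hv, Complex.star_def, Complex.conj_ofReal]
    ring
  -- invertibility
  have hU : IsUnit (Mc - z • (1 : Matrix (Fin N) (Fin N) ℂ)).det :=
    stmt18_herm_det_ne Mc hermMc hz
  set G : Matrix (Fin N) (Fin N) ℂ := (Mc - z • (1 : Matrix (Fin N) (Fin N) ℂ))⁻¹ with hG
  set B : Fin m → Matrix (Fin N) (Fin N) ℂ :=
    fun α => Mc - (τ α : ℂ) • vecMulVec (v α) (v α) - z • (1 : Matrix (Fin N) (Fin N) ℂ)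
    with hB
  have hUα : ∀ α, IsUnit (B α).det := by
    intro α
    exact stmt18_herm_det_ne _ (hermMc.sub (hermV α)) hz
  have hBplus : ∀ α, B α + (τ α : ℂ) • vecMulVec (v α) (v α)
      = Mc - z • (1 : Matrix (Fin N) (Fin N) ℂ) := by
    intro α; rw [hB]; beta_reduce; rw [sub_right_comm, sub_add_cancel]
  -- rank-one identities
  have hro : ∀ α, 1 + (τ α : ℂ) * (v α ⬝ᵥ ((B α)⁻¹ *ᵥ v α)) ≠ 0 ∧
      (τ α : ℂ) * (v α ⬝ᵥ (G *ᵥ v α))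
        = 1 - (1 + (τ α : ℂ) * (v α ⬝ᵥ ((B α)⁻¹ *ᵥ v α)))⁻¹ := by
    intro α
    have := stmt18_rank_one (B α) (v α) (τ α : ℂ) (hUα α) (by rw [hBplus α]; exact hU)
    rwa [hBplus α, ← hG] at this
  -- trace identities
  have htr1 : (Mc * G).trace - z * G.trace = (N : ℂ) := by
    have h1 : (Mc - z • (1 : Matrix (Fin N) (Fin N) ℂ)) * G = 1 :=
      Matrix.mul_nonsing_inv _ hU
    have h2 := congrArg Matrix.trace h1
    rwa [Matrix.sub_mul, Matrix.smul_mul, Matrix.one_mul, Matrix.trace_sub, Matrix.trace_smul,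
      smul_eq_mul, Matrix.trace_one, Fintype.card_fin] at h2
  have htrM : (Mc * G).trace = ∑ α, (τ α : ℂ) * (v α ⬝ᵥ (G *ᵥ v α)) := by
    rw [hMc, Finset.sum_mul, Matrix.trace_sum]
    exact Finset.sum_congr rfl fun α _ => by
      rw [Matrix.smul_mul, Matrix.trace_smul, smul_eq_mul, stmt18_trace_vecMulVec_mul]
  have htrM2 : (Mc * G).trace
      = (m : ℂ) - ∑ α, (1 + (τ α : ℂ) * (v α ⬝ᵥ ((B α)⁻¹ *ᵥ v α)))⁻¹ := by
    rw [htrM, Finset.sum_congr rfl fun α _ => (hro α).2, Finset.sum_sub_distrib]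
    simp
  have hNc : (N : ℂ) ≠ 0 := Nat.cast_ne_zero.mpr hN.ne'
  have hzg : z * G.trace = (Mc * G).trace - (N : ℂ) := by linear_combination -htr1
  calc z * ((N : ℂ)⁻¹ * G.trace)
      = (N : ℂ)⁻¹ * (z * G.trace) := by ring
    _ = (N : ℂ)⁻¹ * (((m : ℂ) - ∑ α, (1 + (τ α : ℂ) * (v α ⬝ᵥ ((B α)⁻¹ *ᵥ v α)))⁻¹)
          - (N : ℂ)) := by rw [hzg, htrM2]
    _ = -1 + (m : ℂ) / N
          - (N : ℂ)⁻¹ * ∑ α, (1 + (τ α : ℂ) * (v α ⬝ᵥ ((B α)⁻¹ *ᵥ v α)))⁻¹ := by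
        field_simp
        ring
end
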